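/- Let G be a finite group and N a normal subgroup of G with |G:N| = n. Suppose that N contains exactly two non-central G-conjugacy classes x₁^G and x₂^G, that |x₁^G| and |x₂^G| are coprime, and that Z(G) ∩ N = 1. Set n₁ = |C_G(x₁)| and n₂ = |C_G(x₂)| with n₁ < n₂. Then ⌊n·n₁/(n₁ − n)⌋ + 1 ≤ n₂ ≤ ⌊2n·n₁/(n₁ − n)⌋ − 1, where ⌊x⌋ denotes the integer part of x. -/

import Mathlib

lemma ncard_conjugatesOf_mul_card_centralizer {G : Type*} [Group G] [Finite G] (x : G) :
    (conjugatesOf x).ncard * Nat.card (Subgroup.centralizer {x}) = Nat.card G := by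
  have h1 : conjugatesOf x = MulAction.orbit (ConjAct G) x :=
    (ConjAct.orbit_eq_carrier_conjClasses x).symm
  have h2 : Nat.card (Subgroup.centralizer {x})
      = Nat.card (MulAction.stabilizer (ConjAct G) x) := by
    rw [Subgroup.centralizer_eq_comap_stabilizer]
    exact Nat.card_congr (ConjAct.toConjAct.toEquiv.subtypeEquiv fun g => Subgroup.mem_comap)
  have h3 : (conjugatesOf x).ncard = (MulAction.stabilizer (ConjAct G) x).index := by
    rw [h1, ← Nat.card_coe_set_eq,
      Nat.card_congr (MulAction.orbitEquivQuotientStabilizer (ConjAct G) x)]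
    rfl
  rw [h2, h3]
  have := (MulAction.stabilizer (ConjAct G) x).index_mul_card
  simpa [Nat.card_congr (ConjAct.ofConjAct (G := G)).toEquiv] using this


/-- **Theorem 3.2.2(ii).** Suppose `N ⊴ G` with `|G:N| = n` contains exactly
two non-central `G`-conjugacy classes `x₁^G`, `x₂^G` of coprime sizes, and `Z(G) ∩ N = 1`.
With `n₁ = |C_G(x₁)|`, `n₂ = |C_G(x₂)|` and `n₁ < n₂`, we have
`⌊n·n₁/(n₁ - n)⌋ + 1 ≤ n₂ ≤ ⌊2n·n₁/(n₁ - n)⌋ - 1`. -/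
theorem centralizer_bounds_second_two_noncentral_classes_coprime
    {G : Type*} [Group G] [Finite G] (N : Subgroup G) (hN : N.Normal)
    (n : ℕ) (hidx : N.index = n)
    (x₁ x₂ : G) (hx₁ : x₁ ∈ N) (hx₂ : x₂ ∈ N)
    (hz₁ : x₁ ∉ Subgroup.center G) (hz₂ : x₂ ∉ Subgroup.center G)
    (hne : conjugatesOf x₁ ≠ conjugatesOf x₂)
    (hcl : {C : Set G | ∃ x : G, x ∈ N ∧ x ∉ Subgroup.center G ∧ C = conjugatesOf x}
        = {conjugatesOf x₁, conjugatesOf x₂})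
    (hcop : Nat.Coprime (conjugatesOf x₁).ncard (conjugatesOf x₂).ncard)
    (hZ : Subgroup.center G ⊓ N = ⊥)
    (n₁ n₂ : ℕ) (hn₁ : n₁ = Nat.card (Subgroup.centralizer {x₁}))
    (hn₂ : n₂ = Nat.card (Subgroup.centralizer {x₂})) (hlt : n₁ < n₂) :
    ⌊(n * n₁ : ℚ) / ((n₁ : ℚ) - n)⌋ + 1 ≤ (n₂ : ℤ) ∧
      (n₂ : ℤ) ≤ ⌊(2 * n * n₁ : ℚ) / ((n₁ : ℚ) - n)⌋ - 1 := by
  set g := Nat.card G with hg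
  set c₁ := (conjugatesOf x₁).ncard with hc₁
  set c₂ := (conjugatesOf x₂).ncard with hc₂
  have h1 : c₁ * n₁ = g := by rw [hn₁]; exact ncard_conjugatesOf_mul_card_centralizer x₁
  have h2 : c₂ * n₂ = g := by rw [hn₂]; exact ncard_conjugatesOf_mul_card_centralizer x₂
  have hsub : ∀ y : G, y ∈ N → conjugatesOf y ⊆ (N : Set G) := by
    intro y hy z hz
    obtain ⟨c, rfl⟩ := isConj_iff.mp hz
    exact hN.conj_mem y hy c
  have hone : ∀ y : G, y ∉ Subgroup.center G → (1 : G) ∉ conjugatesOf y := by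
    intro y hy h
    obtain ⟨c, hc⟩ := isConj_iff.mp h
    exact hy ((conj_eq_one_iff.mp hc) ▸ Subgroup.one_mem _)
  have hset : (N : Set G) = insert 1 (conjugatesOf x₁ ∪ conjugatesOf x₂) := by
    ext y
    constructor
    · intro hy
      by_cases hyc : y ∈ Subgroup.center G
      · left
        have : y ∈ Subgroup.center G ⊓ N := Subgroup.mem_inf.mpr ⟨hyc, hy⟩
        rw [hZ, Subgroup.mem_bot] at this
        exact this
      · right
        have hcy : conjugatesOf y ∈
            {C : Set G | ∃ x : G, x ∈ N ∧ x ∉ Subgroup.center G ∧ C = conjugatesOf x} :=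
          ⟨y, hy, hyc, rfl⟩
        rw [hcl] at hcy
        rcases hcy with h | h
        · exact Or.inl (h ▸ mem_conjugatesOf_self)
        · exact Or.inr (h ▸ mem_conjugatesOf_self)
    · rintro (rfl | h | h)
      · exact N.one_mem
      · exact hsub x₁ hx₁ h
      · exact hsub x₂ hx₂ h
  have hdisj : Disjoint (conjugatesOf x₁) (conjugatesOf x₂) := by
    rw [Set.disjoint_left]
    intro a h1' h2'
    exact hne ((h1' : IsConj x₁ a).conjugatesOf_eq.trans (h2' : IsConj x₂ a).conjugatesOf_eq.symm)
  have hcardN : Nat.card N = 1 + c₁ + c₂ := by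
    have key : Nat.card N = (N : Set G).ncard := Nat.card_coe_set_eq _
    rw [key, hset,
      Set.ncard_insert_of_notMem (by
        rintro (h | h)
        exacts [hone x₁ hz₁ h, hone x₂ hz₂ h]) (Set.toFinite _),
      Set.ncard_union_eq hdisj (Set.toFinite _) (Set.toFinite _)]
    ring
  have h3 : n * (1 + c₁ + c₂) = g := by
    rw [← hcardN, ← hidx]; exact N.index_mul_card
  have hgpos : 0 < g := Nat.card_pos
  have hnpos : 0 < n := by
    rcases Nat.eq_zero_or_pos n with h | h
    · subst h; simp at h3; omega
    · exact h
  have hn₁pos : 0 < n₁ := by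
    rcases Nat.eq_zero_or_pos n₁ with h | h
    · subst h; simp at h1; omega
    · exact h
  have hn₂pos : 0 < n₂ := lt_trans hn₁pos hlt
  -- c₂ ≥ 2
  have hc₂two : 2 ≤ c₂ := by
    rcases Nat.lt_or_ge c₂ 2 with h | h
    · interval_cases c₂
      · omega
      · exfalso
        have hn2g : n₂ = g := by omega
        have : Subgroup.centralizer {x₂} = ⊤ :=
          Subgroup.eq_top_of_card_eq _ (by rw [← hn₂, hn2g])
        refine hz₂ (Subgroup.mem_center_iff.mpr fun y => ?_)
        have : y ∈ Subgroup.centralizer {x₂} := this ▸ Subgroup.mem_top y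
        exact (Subgroup.mem_centralizer_iff.mp this x₂ rfl).symm
    · exact h
  clear_value g c₁ c₂
  -- rational facts
  have hq1 : (c₁ : ℚ) * n₁ = g := by exact_mod_cast h1
  have hq2 : (c₂ : ℚ) * n₂ = g := by exact_mod_cast h2
  have hq3 : (n : ℚ) * (1 + c₁ + c₂) = g := by exact_mod_cast h3
  have hqg : (0 : ℚ) < g := by exact_mod_cast hgpos
  have hqn : (0 : ℚ) < n := by exact_mod_cast hnpos
  have hqn₁ : (0 : ℚ) < n₁ := by exact_mod_cast hn₁pos
  have hqn₂ : (0 : ℚ) < n₂ := by exact_mod_cast hn₂pos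
  have hid : (g : ℚ) * ((n₁:ℚ)*n₂ - n*n₁ - n*n₂) = n₁*n₂*n := by
    linear_combination (n:ℚ)*n₂*hq1 + n*n₁*hq2 - n₁*n₂*hq3
  have hX : (0:ℚ) < (n₁:ℚ)*n₂ - n*n₁ - n*n₂ := by
    nlinarith [hid, mul_pos (mul_pos hqn₁ hqn₂) hqn]
  have hnn₁ : (n:ℚ) < n₁ := by nlinarith [hX, mul_pos hqn hqn₂]
  have hnn₁N : n < n₁ := by exact_mod_cast hnn₁
  have hn₂3 : (3:ℚ) ≤ n₂ := by
    have : 3 ≤ n₂ := by omega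
    exact_mod_cast this
  have hg2 : (2:ℚ) * n₂ ≤ g := by
    have : 2 * n₂ ≤ g := by calc 2 * n₂ ≤ c₂ * n₂ := by exact Nat.mul_le_mul_right _ hc₂two
                                _ = g := h2
    exact_mod_cast this
  have hden : (0:ℚ) < (n₁:ℚ) - n := by linarith
  constructor
  · rw [Int.add_one_le_iff, Int.floor_lt]
    rw [div_lt_iff₀ hden]
    push_cast
    nlinarith [hX]
  · rw [Int.le_sub_one_iff, Int.lt_iff_add_one_le, Int.le_floor]
    rw [le_div_iff₀ hden]
    push_cast
    have e1 : (0:ℚ) ≤ ((g:ℚ) - 2*n₂)*((n₂:ℚ)-1) :=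
      mul_nonneg (by linarith) (by linarith)
    have e2 : (0:ℚ) ≤ (n₂:ℚ)*((n₂:ℚ)-3) := mul_nonneg (le_of_lt hqn₂) (by linarith)
    have key : ((n₂:ℚ)+1)*((n₂:ℚ)+g) ≤ 2*n₂*g := by
      ring_nf at e1 e2 ⊢
      linarith [e1, e2]
    have hid2 : (n₂:ℚ)*g*((n₁:ℚ)-n) = n*n₁*((n₂:ℚ)+g) := by linarith [hid]
    have step : ((n₂:ℚ)+1)*((n₁:ℚ)-n)*(n₂*g) ≤ (2*n*n₁)*(n₂*g) := by
      calc ((n₂:ℚ)+1)*((n₁:ℚ)-n)*(n₂*g) = (n*n₁)*(((n₂:ℚ)+1)*((n₂:ℚ)+g)) := by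
            linear_combination ((n₂:ℚ)+1)*hid2
        _ ≤ (n*n₁)*(2*n₂*g) := by
            exact mul_le_mul_of_nonneg_left key (by positivity)
        _ = (2*n*n₁)*(n₂*g) := by ring
    exact le_of_mul_le_mul_right step (by positivity)
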